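/- Consider a finite recurrent MDP on S that is skip-free in the negative direction on the tree. Let d be a stationary deterministic policy with average cost g(d), set x = g(d), and let d¹ be the policy of the x-revised first-return problem: d¹(i) = a_i for i ≠ 0, where a_i and y_i come from the downward recursion y_i = min_{a∈A} (c_i(a) − x + ∑_{k∈D(i)} p̄_{ik}(a) y_k)/p_{iρ(i)}(a) with a_i attaining the minimum, and d¹(0) = argmin_{a∈A} (c_0(a) − x + ∑_{k∈D(0)} p̄_{0k}(a) y_k)/(1 − p_{00}(a)). Then g(d¹) ≤ g(d). -/

import Mathlib

open Finset Filter

noncomputable section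

/-- A rooted tree structure on a state space `S`: a root, a parent map fixing the root,
such that iterating the parent map from any state reaches the root. -/
structure SFTree (S : Type*) where
  root : S
  parent : S → S
  parent_root : parent root = root
  reaches_root : ∀ i : S, ∃ n : ℕ, parent^[n] i = root

namespace SFTree

variable {S : Type*} [Fintype S] [DecidableEq S]

open Classical in
/-- The set of descendants of `i`: states `j ≠ i` whose path to the root passes through `i`. -/
def desc (T : SFTree S) (i : S) : Finset S :=
  Finset.univ.filter fun j => j ≠ i ∧ ∃ n : ℕ, T.parent^[n] j = i

open Classical in
/-- The subtree rooted at `i`: `i` together with its descendants. -/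
def subtree (T : SFTree S) (i : S) : Finset S :=
  Finset.univ.filter fun j => ∃ n : ℕ, T.parent^[n] j = i

open Classical in
/-- The states strictly after `i` on the path from `i` to `j`. -/
def delta (T : SFTree S) (i j : S) : Finset S :=
  Finset.univ.filter fun r =>
    r ≠ i ∧ (∃ n : ℕ, T.parent^[n] j = r) ∧ (∃ m : ℕ, T.parent^[m] r = i)

end SFTree

/-- A finite Markov decision process: costs and transition probabilities. -/
structure MDP (S A : Type*) [Fintype S] where
  c : S → A → ℝ
  p : S → A → S → ℝ
  p_nonneg : ∀ i a j, 0 ≤ p i a j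
  p_sum_one : ∀ i a, ∑ j, p i a j = 1

namespace MDP

variable {S A : Type*} [Fintype S] [DecidableEq S]

/-- Tail probability: the probability of jumping from `i` into the subtree rooted at `k`. -/
def ptail (M : MDP S A) (T : SFTree S) (i : S) (a : A) (k : S) : ℝ :=
  ∑ s ∈ T.subtree k, M.p i a s

/-- Skip-free in the negative direction on the tree `T`: from `i ≠ root` the only possible
transitions are to the parent of `i` or into the subtree rooted at `i`. -/
def IsSkipFree (M : MDP S A) (T : SFTree S) : Prop :=
  ∀ i, i ≠ T.root → ∀ a j, M.p i a j ≠ 0 → j = T.parent i ∨ j ∈ T.subtree i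

/-- Transition matrix of the stationary deterministic policy `d`. -/
def Pmat (M : MDP S A) (d : S → A) : Matrix S S ℝ :=
  Matrix.of fun i j => M.p i (d i) j

/-- Cost vector of the stationary deterministic policy `d`. -/
def cvec (M : MDP S A) (d : S → A) : S → ℝ := fun i => M.c i (d i)

/-- Expected average cost of the stationary deterministic policy `d` starting from `i`. -/
def avgCost (M : MDP S A) (d : S → A) (i : S) : ℝ :=
  Filter.limsup
    (fun n : ℕ => (n : ℝ)⁻¹ * ∑ t ∈ Finset.range n, ((M.Pmat d ^ t).mulVec (M.cvec d)) i)
    Filter.atTop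

end MDP

/-- A (substochastic) matrix is irreducible if every state can reach every other state
in a positive number of steps. -/
def MatIrreducible {S : Type*} [Fintype S] [DecidableEq S] (P : Matrix S S ℝ) : Prop :=
  ∀ i j, ∃ n : ℕ, 0 < n ∧ 0 < (P ^ n) i j

/-- A recurrent model: every stationary deterministic policy has an irreducible
transition matrix. -/
def IsRecurrentModel {S A : Type*} [Fintype S] [DecidableEq S] (M : MDP S A) : Prop :=
  ∀ d : S → A, MatIrreducible (M.Pmat d)

/-- The probability weight of a path of length `n`. -/
def pathWt {S : Type*} [Fintype S] (P : Matrix S S ℝ) {n : ℕ} (x : Fin (n + 1) → S) : ℝ :=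
  ∏ t : Fin n, P (x t.castSucc) (x t.succ)

open Classical in
/-- `E[f(X_n); τ > n]` for the chain with matrix `P` started at `z`, where `τ` is the
first-return epoch to `z` (the first time the chain enters `z` from a state `≠ z`). -/
def retTerm {S : Type*} [Fintype S] (P : Matrix S S ℝ) (z : S) (f : S → ℝ) (n : ℕ) : ℝ :=
  ∑ x ∈ Finset.univ.filter
      (fun (x : Fin (n + 1) → S) =>
        x 0 = z ∧ ∀ t : Fin n, ¬(x t.castSucc ≠ z ∧ x t.succ = z)),
    pathWt P x * f (x (Fin.last n))

/-- `E[∑_{t=0}^{τ-1} f(X_t)]` for the chain with matrix `P` started at `z`, where `τ` is the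
first-return epoch to `z`. -/
def retSum {S : Type*} [Fintype S] (P : Matrix S S ℝ) (z : S) (f : S → ℝ) : ℝ :=
  ∑' n : ℕ, retTerm P z f n

open Classical in
/-- `E[f(X_n); σ > n]` for the chain with matrix `P` started at `i`, where `σ` is the
first-passage epoch to `z`, `σ = min {t > 0 : X_t = z}`. -/
def passTerm {S : Type*} [Fintype S] (P : Matrix S S ℝ) (i z : S) (f : S → ℝ) (n : ℕ) : ℝ :=
  ∑ x ∈ Finset.univ.filter
      (fun (x : Fin (n + 1) → S) => x 0 = i ∧ ∀ t : Fin n, x t.succ ≠ z),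
    pathWt P x * f (x (Fin.last n))

/-- `E[∑_{t=0}^{σ-1} f(X_t)]` for the chain with matrix `P` started at `i`, where `σ` is the
first-passage epoch to `z`. -/
def passSum {S : Type*} [Fintype S] (P : Matrix S S ℝ) (i z : S) (f : S → ℝ) : ℝ :=
  ∑' n : ℕ, passTerm P i z f n

end


set_option linter.unusedSectionVars false
set_option maxHeartbeats 1600000

noncomputable section
namespace SFTree
variable {S : Type*} [Fintype S] [DecidableEq S]
variable (T : SFTree S)

lemma iterate_root (n : ℕ) : T.parent^[n] T.root = T.root :=
  Function.iterate_fixed T.parent_root n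

lemma eq_root_of_periodic {i : S} {p : ℕ} (hp : 0 < p) (h : T.parent^[p] i = i) :
    i = T.root := by
  obtain ⟨r, hr⟩ := T.reaches_root i
  have key : ∀ k : ℕ, T.parent^[p * k] i = i := by
    intro k
    induction k with
    | zero => simp
    | succ k ih => rw [Nat.mul_succ, Function.iterate_add_apply, h, ih]
  have hge : r ≤ p * (r + 1) := by nlinarith
  calc i = T.parent^[p * (r + 1)] i := (key (r + 1)).symm
    _ = T.parent^[p * (r + 1) - r] (T.parent^[r] i) := by
        rw [← Function.iterate_add_apply, Nat.sub_add_cancel hge]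
    _ = T.root := by rw [hr, iterate_root]

lemma anti {i j : S} {n m : ℕ} (hn : T.parent^[n] j = i) (hm : T.parent^[m] i = j) :
    i = j := by
  rcases Nat.eq_zero_or_pos (n + m) with h0 | hpos
  · have hn0 : n = 0 := by omega
    subst hn0; exact hn.symm
  · have h1 : T.parent^[n + m] i = i := by rw [Function.iterate_add_apply, hm, hn]
    have h2 : T.parent^[m + n] j = j := by rw [Function.iterate_add_apply, hn, hm]
    rw [T.eq_root_of_periodic hpos h1, T.eq_root_of_periodic (by omega) h2]

lemma mem_subtree {k j : S} : j ∈ T.subtree k ↔ ∃ n : ℕ, T.parent^[n] j = k := by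
  simp [subtree]

lemma mem_desc {i k : S} : k ∈ T.desc i ↔ k ≠ i ∧ ∃ n : ℕ, T.parent^[n] k = i := by
  simp [desc]

lemma mem_delta {i j r : S} :
    r ∈ T.delta i j ↔ r ≠ i ∧ (∃ n : ℕ, T.parent^[n] j = r) ∧ ∃ m : ℕ, T.parent^[m] r = i := by
  simp [delta]

lemma mem_desc_root {k : S} : k ∈ T.desc T.root ↔ k ≠ T.root := by
  rw [mem_desc]
  exact ⟨fun h => h.1, fun h => ⟨h, T.reaches_root k⟩⟩

lemma mem_delta_root {j r : S} :
    r ∈ T.delta T.root j ↔ r ≠ T.root ∧ ∃ n : ℕ, T.parent^[n] j = r := by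
  rw [mem_delta]
  exact ⟨fun h => ⟨h.1, h.2.1⟩, fun h => ⟨h.1, h.2, T.reaches_root r⟩⟩

lemma delta_root_root : T.delta T.root T.root = ∅ := by
  ext r
  simp only [Finset.notMem_empty, iff_false, T.mem_delta_root]
  rintro ⟨h1, n, h2⟩
  exact h1 (by rw [← h2, iterate_root])

lemma parent_not_mem_subtree {i : S} (hi : i ≠ T.root) : T.parent i ∉ T.subtree i := by
  rw [T.mem_subtree]
  rintro ⟨n, hn⟩
  exact hi (T.eq_root_of_periodic (Nat.succ_pos n)
    (by rw [Function.iterate_succ_apply, hn]))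

end SFTree

namespace StmtAux
open SFTree Matrix
variable {S : Type*} [Fintype S] [DecidableEq S]

lemma mv (Q : Matrix S S ℝ) (v : S → ℝ) (i : S) : Q.mulVec v i = ∑ j, Q i j * v j := rfl

lemma pow_nonneg (P : Matrix S S ℝ) (hP : ∀ i j, 0 ≤ P i j) :
    ∀ (n : ℕ) (i j : S), 0 ≤ (P ^ n) i j := by
  intro n
  induction n with
  | zero =>
    intro i j
    by_cases h : i = j <;> simp [Matrix.one_apply, h]
  | succ n ih =>
    intro i j
    rw [pow_succ, Matrix.mul_apply]
    exact Finset.sum_nonneg fun k _ => mul_nonneg (ih i k) (hP k j)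

lemma pow_rowsum (P : Matrix S S ℝ) (hP1 : ∀ i, ∑ j, P i j = 1) :
    ∀ (n : ℕ) (i : S), ∑ j, (P ^ n) i j = 1 := by
  intro n
  induction n with
  | zero => intro i; simp [Matrix.one_apply]
  | succ n ih =>
    intro i
    simp only [pow_succ, Matrix.mul_apply]
    rw [Finset.sum_comm]
    calc ∑ k, ∑ j, (P ^ n) i k * P k j = ∑ k, (P ^ n) i k * ∑ j, P k j := by
          simp [Finset.mul_sum]
      _ = 1 := by simp only [hP1, mul_one]; exact ih i

lemma mulVec_abs_le (P : Matrix S S ℝ) (hP : ∀ i j, 0 ≤ P i j) (hP1 : ∀ i, ∑ j, P i j = 1)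
    (u : S → ℝ) (C : ℝ) (hu : ∀ j, |u j| ≤ C) (n : ℕ) (i : S) :
    |((P ^ n).mulVec u) i| ≤ C := by
  rw [mv]
  calc |∑ j, (P ^ n) i j * u j| ≤ ∑ j, |(P ^ n) i j * u j| :=
        Finset.abs_sum_le_sum_abs _ _
    _ ≤ ∑ j, (P ^ n) i j * C := by
        refine Finset.sum_le_sum fun j _ => ?_
        rw [abs_mul, abs_of_nonneg (pow_nonneg P hP n i j)]
        exact mul_le_mul_of_nonneg_left (hu j) (pow_nonneg P hP n i j)
    _ = C := by rw [← Finset.sum_mul, pow_rowsum P hP1, one_mul]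

lemma mulVec_mono (P : Matrix S S ℝ) (hP : ∀ i j, 0 ≤ P i j) {u v : S → ℝ}
    (h : ∀ j, u j ≤ v j) (i : S) : P.mulVec u i ≤ P.mulVec v i := by
  rw [mv, mv]
  exact Finset.sum_le_sum fun j _ => mul_le_mul_of_nonneg_left (h j) (hP i j)

lemma mulVec_swap (P : Matrix S S ℝ) (v : ℕ → S → ℝ) (n : ℕ) (i : S) :
    P.mulVec (fun j => ∑ t ∈ Finset.range n, v t j) i
      = ∑ t ∈ Finset.range n, P.mulVec (v t) i := by
  simp only [mv, Finset.mul_sum]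
  exact Finset.sum_comm

lemma pow_succ_mulVec (P : Matrix S S ℝ) (v : S → ℝ) (t : ℕ) :
    (P ^ (t + 1)).mulVec v = P.mulVec ((P ^ t).mulVec v) := by
  rw [Matrix.mulVec_mulVec, ← pow_succ']

lemma pow_succ_mulVec' (P : Matrix S S ℝ) (v : S → ℝ) (t : ℕ) :
    (P ^ (t + 1)).mulVec v = (P ^ t).mulVec (P.mulVec v) := by
  rw [Matrix.mulVec_mulVec, ← pow_succ]

lemma sum_prepend (P : Matrix S S ℝ) (v : S → ℝ) (n : ℕ) (i : S) :
    ∑ t ∈ Finset.range (n + 1), ((P ^ t).mulVec v) i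
      = v i + P.mulVec (fun j => ∑ t ∈ Finset.range n, ((P ^ t).mulVec v) j) i := by
  rw [Finset.sum_range_succ', mulVec_swap]
  simp only [← pow_succ_mulVec, pow_zero, Matrix.one_mulVec]
  rw [add_comm]

lemma mulVec_shape (Q : Matrix S S ℝ) {i : S} (hQ : ∑ j, Q i j = 1)
    (a b : ℝ) (v u z : S → ℝ) :
    Q.mulVec (fun j => a + b * v j + u j - z j) i
      = a + b * Q.mulVec v i + Q.mulVec u i - Q.mulVec z i := by
  simp only [mv]
  have h1 : ∀ j, Q i j * (a + b * v j + u j - z j)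
      = a * Q i j + b * (Q i j * v j) + Q i j * u j - Q i j * z j := fun j => by ring
  simp only [h1, Finset.sum_add_distrib, Finset.sum_sub_distrib, ← Finset.mul_sum]
  rw [hQ]
  ring

lemma telescope_eq (P : Matrix S S ℝ) (hP1 : ∀ i, ∑ j, P i j = 1) (w u : S → ℝ) (γ : ℝ)
    (hrel : ∀ i, w i + P.mulVec u i = u i + γ) (n : ℕ) (i : S) :
    ∑ t ∈ Finset.range n, ((P ^ t).mulVec w) i = n * γ + u i - ((P ^ n).mulVec u) i := by
  induction n with
  | zero => simp [Matrix.one_mulVec]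
  | succ n ih =>
    rw [Finset.sum_range_succ, ih]
    have hw : w = fun j => γ + 0 * u j + u j - P.mulVec u j :=
      funext fun j => by have := hrel j; ring_nf; linarith
    have expand : ((P ^ n).mulVec w) i
        = ((P ^ n).mulVec u) i + γ - ((P ^ (n + 1)).mulVec u) i := by
      conv_lhs => rw [hw]
      rw [mulVec_shape (P ^ n) (pow_rowsum P hP1 n i), ← pow_succ_mulVec']
      ring
    rw [expand]
    push_cast
    ring

lemma telescope_ge (P : Matrix S S ℝ) (hP : ∀ i j, 0 ≤ P i j) (hP1 : ∀ i, ∑ j, P i j = 1)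
    (w u e : S → ℝ) (γ κ : ℝ)
    (hrel : ∀ i, u i + γ + κ * e i ≤ w i + P.mulVec u i) (n : ℕ) (i : S) :
    n * γ + κ * (∑ t ∈ Finset.range n, ((P ^ t).mulVec e) i) + u i - ((P ^ n).mulVec u) i
      ≤ ∑ t ∈ Finset.range n, ((P ^ t).mulVec w) i := by
  induction n generalizing i with
  | zero => simp [Matrix.one_mulVec]
  | succ n ih =>
    rw [sum_prepend P w n i]
    set Nf : S → ℝ := fun j => ∑ t ∈ Finset.range n, ((P ^ t).mulVec e) j with hNf
    have hmono : P.mulVec (fun j => (n : ℝ) * γ + κ * Nf j + u j - ((P ^ n).mulVec u) j) i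
        ≤ P.mulVec (fun j => ∑ t ∈ Finset.range n, ((P ^ t).mulVec w) j) i :=
      mulVec_mono P hP (fun j => ih j) i
    have hexp := mulVec_shape P (hP1 i) ((n : ℝ) * γ) κ Nf u ((P ^ n).mulVec u)
    rw [hexp, ← pow_succ_mulVec] at hmono
    have hsum_e : ∑ t ∈ Finset.range (n + 1), ((P ^ t).mulVec e) i
        = e i + P.mulVec Nf i := sum_prepend P e n i
    have hsplit : κ * (∑ t ∈ Finset.range (n + 1), ((P ^ t).mulVec e) i)
        = κ * e i + κ * P.mulVec Nf i := by rw [hsum_e]; ring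
    have hr := hrel i
    push_cast
    linarith

lemma telescope_le (P : Matrix S S ℝ) (hP : ∀ i j, 0 ≤ P i j) (hP1 : ∀ i, ∑ j, P i j = 1)
    (w u : S → ℝ) (γ : ℝ)
    (hrel : ∀ i, w i + P.mulVec u i ≤ u i + γ) (n : ℕ) (i : S) :
    ∑ t ∈ Finset.range n, ((P ^ t).mulVec w) i ≤ n * γ + u i - ((P ^ n).mulVec u) i := by
  induction n generalizing i with
  | zero => simp [Matrix.one_mulVec]
  | succ n ih =>
    rw [sum_prepend P w n i]
    have hshape : (fun j => (n : ℝ) * γ + u j - ((P ^ n).mulVec u) j)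
        = fun j => (n : ℝ) * γ + 0 * u j + u j - ((P ^ n).mulVec u) j :=
      funext fun j => by ring
    have hmono : P.mulVec (fun j => ∑ t ∈ Finset.range n, ((P ^ t).mulVec w) j) i
        ≤ P.mulVec (fun j => (n : ℝ) * γ + u j - ((P ^ n).mulVec u) j) i :=
      mulVec_mono P hP (fun j => ih j) i
    rw [hshape, mulVec_shape P (hP1 i), ← pow_succ_mulVec] at hmono
    have hr := hrel i
    push_cast
    linarith

lemma pow_fixed (P : Matrix S S ℝ) {u : S → ℝ} (hu : P.mulVec u = u) :
    ∀ n : ℕ, (P ^ n).mulVec u = u := by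
  intro n
  induction n with
  | zero => simp [Matrix.one_mulVec]
  | succ n ih => rw [pow_succ, ← Matrix.mulVec_mulVec, hu, ih]

lemma harmonic_const (P : Matrix S S ℝ) (hP : ∀ i j, 0 ≤ P i j)
    (hP1 : ∀ i, ∑ j, P i j = 1)
    (hirr : MatIrreducible P) {u : S → ℝ} (hu : P.mulVec u = u) (j j' : S) :
    u j = u j' := by
  have hne : (Finset.univ : Finset S).Nonempty := ⟨j, mem_univ j⟩
  obtain ⟨i₀, -, hmax⟩ := Finset.exists_max_image univ u hne
  suffices H : ∀ k, u k = u i₀ by rw [H j, H j']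
  intro k
  obtain ⟨n, -, hpos⟩ := hirr i₀ k
  have hfix := pow_fixed P hu n
  have hsum : ∑ l, (P ^ n) i₀ l * (u i₀ - u l) = 0 := by
    have h1 : ∑ l, (P ^ n) i₀ l * (u i₀ - u l)
        = (∑ l, (P ^ n) i₀ l) * u i₀ - ((P ^ n).mulVec u) i₀ := by
      rw [mv, Finset.sum_mul, ← Finset.sum_sub_distrib]
      exact Finset.sum_congr rfl fun l _ => by ring
    rw [h1, hfix, pow_rowsum P hP1, one_mul, sub_self]
  have hterm : ∀ l ∈ (univ : Finset S), 0 ≤ (P ^ n) i₀ l * (u i₀ - u l) :=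
    fun l _ => mul_nonneg (pow_nonneg P hP n i₀ l) (by linarith [hmax l (mem_univ l)])
  have hzero := (Finset.sum_eq_zero_iff_of_nonneg hterm).mp hsum k (mem_univ k)
  rcases mul_eq_zero.mp hzero with h | h
  · exact absurd h (ne_of_gt hpos)
  · linarith

lemma exists_pi [Nonempty S] (P : Matrix S S ℝ) (hP : ∀ i j, 0 ≤ P i j)
    (hP1 : ∀ i, ∑ j, P i j = 1) (hirr : MatIrreducible P) :
    ∃ π : S → ℝ, (∀ j, 0 < π j) ∧ (∀ j, ∑ k, π k * P k j = π j) := by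
  classical
  set A : Matrix S S ℝ := 1 - P with hA
  have hone_ne : (fun _ : S => (1 : ℝ)) ≠ 0 := by
    intro h
    have := congrFun h (Classical.arbitrary S)
    simp at this
  have hker : LinearMap.ker A.mulVecLin
      = Submodule.span ℝ {(fun _ : S => (1 : ℝ))} := by
    apply le_antisymm
    · intro u hu
      rw [LinearMap.mem_ker, Matrix.mulVecLin_apply, hA, Matrix.sub_mulVec,
        Matrix.one_mulVec, sub_eq_zero] at hu
      have hc := harmonic_const P hP hP1 hirr hu.symm
      rw [Submodule.mem_span_singleton]
      exact ⟨u (Classical.arbitrary S),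
        funext fun k => by simp [hc (Classical.arbitrary S) k]⟩
    · rw [Submodule.span_le, Set.singleton_subset_iff]
      simp only [SetLike.mem_coe, LinearMap.mem_ker, Matrix.mulVecLin_apply, hA,
        Matrix.sub_mulVec, Matrix.one_mulVec, sub_eq_zero]
      funext i
      simp [mv, hP1 i]
  have hcard : 0 < Fintype.card S := Fintype.card_pos
  have hrank : A.rank = Fintype.card S - 1 := by
    have h1 := LinearMap.finrank_range_add_finrank_ker A.mulVecLin
    rw [hker, finrank_span_singleton hone_ne] at h1
    have h2 : Module.finrank ℝ (S → ℝ) = Fintype.card S := by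
      simp [Module.finrank_pi]
    rw [h2] at h1
    have h3 : A.rank = Module.finrank ℝ (LinearMap.range A.mulVecLin) := rfl
    omega
  have hrankT : (Aᵀ).rank = Fintype.card S - 1 := by
    rw [Matrix.rank_transpose]; exact hrank
  have hkerT : LinearMap.ker (Aᵀ.mulVecLin) ≠ ⊥ := by
    intro hbot
    have h1 := LinearMap.finrank_range_add_finrank_ker (Aᵀ.mulVecLin)
    rw [hbot, finrank_bot] at h1
    have h2 : Module.finrank ℝ (S → ℝ) = Fintype.card S := by
      simp [Module.finrank_pi]
    rw [h2] at h1
    have h3 : (Aᵀ).rank = Module.finrank ℝ (LinearMap.range Aᵀ.mulVecLin) := rfl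
    omega
  obtain ⟨π₀, hπ₀mem, hπ₀ne⟩ := Submodule.exists_mem_ne_zero_of_ne_bot hkerT
  have hinv0 : ∀ j, ∑ k, π₀ k * P k j = π₀ j := by
    rw [LinearMap.mem_ker, Matrix.mulVecLin_apply, hA, Matrix.transpose_sub,
      Matrix.transpose_one, Matrix.sub_mulVec, Matrix.one_mulVec, sub_eq_zero] at hπ₀mem
    intro j
    have h4 := congrFun hπ₀mem j
    rw [mv] at h4
    rw [h4]
    exact Finset.sum_congr rfl fun k _ => by rw [Matrix.transpose_apply, mul_comm]
  set π : S → ℝ := fun k => |π₀ k| with hπdef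
  have hππ : ∀ j, π j ≤ ∑ k, π k * P k j := by
    intro j
    calc π j = |∑ k, π₀ k * P k j| := by rw [hinv0 j]
      _ ≤ ∑ k, |π₀ k * P k j| := Finset.abs_sum_le_sum_abs _ _
      _ = ∑ k, π k * P k j := Finset.sum_congr rfl fun k _ => by
          rw [abs_mul, abs_of_nonneg (hP k j)]
  have hπinv : ∀ j, ∑ k, π k * P k j = π j := by
    have hsums : ∑ j, ∑ k, π k * P k j = ∑ j, π j := by
      rw [Finset.sum_comm]
      exact Finset.sum_congr rfl fun k _ => by rw [← Finset.mul_sum, hP1 k, mul_one]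
    intro j
    by_contra hne
    have hlt : π j < ∑ k, π k * P k j := lt_of_le_of_ne (hππ j) (fun h => hne h.symm)
    have : ∑ j, π j < ∑ j, ∑ k, π k * P k j :=
      Finset.sum_lt_sum (fun j _ => hππ j) ⟨j, mem_univ j, hlt⟩
    linarith
  have hπ0 : ∀ k, 0 ≤ π k := fun k => abs_nonneg _
  have hπpow : ∀ (n : ℕ) (j : S), ∑ k, π k * (P ^ n) k j = π j := by
    intro n
    induction n with
    | zero =>
      intro j
      simp only [pow_zero, Matrix.one_apply]
      rw [Finset.sum_congr rfl fun k (_ : k ∈ univ) => by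
        rw [mul_ite, mul_one, mul_zero]]
      simp
    | succ n ih =>
      intro j
      simp only [pow_succ, Matrix.mul_apply, Finset.mul_sum]
      rw [Finset.sum_comm]
      calc ∑ l, ∑ k, π k * ((P ^ n) k l * P l j)
          = ∑ l, (∑ k, π k * (P ^ n) k l) * P l j := by
            refine Finset.sum_congr rfl fun l _ => ?_
            rw [Finset.sum_mul]
            exact Finset.sum_congr rfl fun k _ => by ring
        _ = ∑ l, π l * P l j := by simp only [ih]
        _ = π j := hπinv j
  obtain ⟨k0, hk0⟩ : ∃ k, π₀ k ≠ 0 := Function.ne_iff.mp hπ₀ne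
  have hk0pos : 0 < π k0 := abs_pos.mpr hk0
  refine ⟨π, fun j => ?_, hπinv⟩
  obtain ⟨n, -, hpos⟩ := hirr k0 j
  have h1 : π k0 * (P ^ n) k0 j ≤ ∑ k, π k * (P ^ n) k j :=
    Finset.single_le_sum (fun k _ => mul_nonneg (hπ0 k) (pow_nonneg P hP n k j))
      (mem_univ k0)
  rw [hπpow n j] at h1
  calc (0 : ℝ) < π k0 * (P ^ n) k0 j := mul_pos hk0pos hpos
    _ ≤ π j := h1

lemma solve [Nonempty S] (P : Matrix S S ℝ) (hP : ∀ i j, 0 ≤ P i j)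
    (hP1 : ∀ i, ∑ j, P i j = 1) (hirr : MatIrreducible P)
    (π : S → ℝ) (hπpos : ∀ j, 0 < π j) (hπinv : ∀ j, ∑ k, π k * P k j = π j)
    (w : S → ℝ) :
    ∃ u : S → ℝ, ∀ i,
      w i + P.mulVec u i = u i + (∑ k, π k * w k) / (∑ k, π k) := by
  classical
  set A : Matrix S S ℝ := 1 - P with hA
  have hπsum : 0 < ∑ k, π k :=
    Finset.sum_pos (fun k _ => hπpos k) univ_nonempty
  set γ : ℝ := (∑ k, π k * w k) / (∑ k, π k) with hγ
  set ℓ : (S → ℝ) →ₗ[ℝ] ℝ :=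
    { toFun := fun v => ∑ k, π k * v k
      map_add' := fun v₁ v₂ => by
        simp only [Pi.add_apply, mul_add, Finset.sum_add_distrib]
      map_smul' := fun c v => by
        simp only [Pi.smul_apply, smul_eq_mul, RingHom.id_apply, Finset.mul_sum]
        exact Finset.sum_congr rfl fun k _ => by ring } with hℓ
  have hone_ne : (fun _ : S => (1 : ℝ)) ≠ 0 := by
    intro h
    have := congrFun h (Classical.arbitrary S)
    simp at this
  have hker : LinearMap.ker A.mulVecLin
      = Submodule.span ℝ {(fun _ : S => (1 : ℝ))} := by
    apply le_antisymm
    · intro u hu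
      rw [LinearMap.mem_ker, Matrix.mulVecLin_apply, hA, Matrix.sub_mulVec,
        Matrix.one_mulVec, sub_eq_zero] at hu
      have hc := harmonic_const P hP hP1 hirr hu.symm
      rw [Submodule.mem_span_singleton]
      exact ⟨u (Classical.arbitrary S),
        funext fun k => by simp [hc (Classical.arbitrary S) k]⟩
    · rw [Submodule.span_le, Set.singleton_subset_iff]
      simp only [SetLike.mem_coe, LinearMap.mem_ker, Matrix.mulVecLin_apply, hA,
        Matrix.sub_mulVec, Matrix.one_mulVec, sub_eq_zero]
      funext i
      simp [mv, hP1 i]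
  have hcard : 0 < Fintype.card S := Fintype.card_pos
  have hpicard : Module.finrank ℝ (S → ℝ) = Fintype.card S := by
    simp [Module.finrank_pi]
  have hrange : Module.finrank ℝ (LinearMap.range A.mulVecLin)
      = Fintype.card S - 1 := by
    have h1 := LinearMap.finrank_range_add_finrank_ker A.mulVecLin
    rw [hker, finrank_span_singleton hone_ne, hpicard] at h1
    omega
  have hℓne : ℓ ≠ 0 := by
    intro h
    have := congrFun (congrArg DFunLike.coe h) (fun _ : S => (1 : ℝ))
    simp only [hℓ, LinearMap.coe_mk, AddHom.coe_mk, LinearMap.zero_apply, mul_one] at this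
    linarith
  have hkerℓ : Module.finrank ℝ (LinearMap.ker ℓ) = Fintype.card S - 1 := by
    have h1 := Module.Dual.finrank_ker_add_one_of_ne_zero hℓne
    rw [hpicard] at h1
    omega
  have hsub : LinearMap.range A.mulVecLin ≤ LinearMap.ker ℓ := by
    rintro _ ⟨v, rfl⟩
    rw [LinearMap.mem_ker]
    show ∑ k, π k * (A.mulVecLin v) k = 0
    have hAv : ∀ k, A.mulVecLin v k = v k - P.mulVec v k := by
      intro k
      rw [Matrix.mulVecLin_apply, hA, Matrix.sub_mulVec, Matrix.one_mulVec]
      rfl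
    have hkey : ∑ k, π k * P.mulVec v k = ∑ k, π k * v k := by
      simp only [mv, Finset.mul_sum]
      rw [Finset.sum_comm]
      calc ∑ j, ∑ k, π k * (P k j * v j)
          = ∑ j, (∑ k, π k * P k j) * v j := by
            refine Finset.sum_congr rfl fun j _ => ?_
            rw [Finset.sum_mul]
            exact Finset.sum_congr rfl fun k _ => by ring
        _ = ∑ j, π j * v j := by simp only [hπinv]
    calc ∑ k, π k * (A.mulVecLin v) k
        = ∑ k, (π k * v k - π k * P.mulVec v k) :=
          Finset.sum_congr rfl fun k _ => by rw [hAv]; ring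
      _ = ∑ k, π k * v k - ∑ k, π k * P.mulVec v k := Finset.sum_sub_distrib _ _
      _ = 0 := by rw [hkey, sub_self]
  have heq : LinearMap.range A.mulVecLin = LinearMap.ker ℓ :=
    Submodule.eq_of_le_of_finrank_le hsub (by rw [hkerℓ, hrange])
  have hmem : (fun i => w i - γ) ∈ LinearMap.range A.mulVecLin := by
    rw [heq, LinearMap.mem_ker]
    show ∑ k, π k * (w k - γ) = 0
    have h1 : ∑ k, π k * (w k - γ) = ∑ k, π k * w k - γ * ∑ k, π k := by
      rw [Finset.mul_sum, ← Finset.sum_sub_distrib]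
      exact Finset.sum_congr rfl fun k _ => by ring
    rw [h1, hγ]
    field_simp
    ring
  obtain ⟨u, hu⟩ := hmem
  refine ⟨u, fun i => ?_⟩
  have h2 := congrFun hu i
  rw [Matrix.mulVecLin_apply, hA, Matrix.sub_mulVec, Matrix.one_mulVec] at h2
  have h3 : u i - P.mulVec u i = w i - γ := by simpa using h2
  rw [hγ] at *
  linarith

lemma tendsto_const_add_inv_mul (L C : ℝ) (z : ℕ → ℝ) (hz : ∀ n, |z n| ≤ C) :
    Tendsto (fun n : ℕ => L + (n : ℝ)⁻¹ * z n) atTop (nhds L) := by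
  have h0 : Tendsto (fun n : ℕ => (n : ℝ)⁻¹ * z n) atTop (nhds 0) := by
    apply squeeze_zero_norm (a := fun n : ℕ => (n : ℝ)⁻¹ * C)
    · intro n
      rw [Real.norm_eq_abs, abs_mul, abs_inv, Nat.abs_cast]
      exact mul_le_mul_of_nonneg_left (hz n) (inv_nonneg.mpr (Nat.cast_nonneg n))
    · simpa using (tendsto_inv_atTop_nhds_zero_nat (𝕜 := ℝ)).mul_const C
  simpa using tendsto_const_nhds.add h0

lemma limsup_inv_mul_eq (γ C : ℝ) (Aseq : ℕ → ℝ) (hA : ∀ n : ℕ, |Aseq n - n * γ| ≤ C) :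
    Filter.limsup (fun n : ℕ => (n : ℝ)⁻¹ * Aseq n) Filter.atTop = γ := by
  apply Filter.Tendsto.limsup_eq
  have h1 := tendsto_const_add_inv_mul γ C (fun n => Aseq n - n * γ) hA
  apply Filter.Tendsto.congr' ?_ h1
  filter_upwards [eventually_ge_atTop 1] with n hn
  have hn0 : (n : ℝ) ≠ 0 := Nat.cast_ne_zero.mpr (by omega)
  field_simp
  ring

lemma limsup_le_of_le_tendsto (a b : ℕ → ℝ) (L m : ℝ)
    (hab : ∀ᶠ n in atTop, a n ≤ b n) (hb : Tendsto b atTop (nhds L))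
    (hm : ∀ n, m ≤ a n) : Filter.limsup a Filter.atTop ≤ L := by
  have h1 : limsup a atTop ≤ limsup b atTop :=
    Filter.limsup_le_limsup hab
      (Filter.isCoboundedUnder_le_of_le atTop hm)
      hb.isBoundedUnder_le
  rwa [hb.limsup_eq] at h1

lemma le_limsup_of_tendsto_le (a b : ℕ → ℝ) (L M : ℝ)
    (hab : ∀ᶠ n in atTop, b n ≤ a n) (hb : Tendsto b atTop (nhds L))
    (hM : ∀ n, a n ≤ M) : L ≤ Filter.limsup a Filter.atTop := by
  have h1 : limsup b atTop ≤ limsup a atTop :=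
    Filter.limsup_le_limsup hab
      hb.isBoundedUnder_ge.isCoboundedUnder_le
      (Filter.isBoundedUnder_of ⟨M, hM⟩)
  rwa [hb.limsup_eq] at h1

lemma ptail_def {A : Type*} (T : SFTree S) (M : MDP S A) (i : S) (a : A) (k : S) :
    M.ptail T i a k = ∑ s ∈ T.subtree k, M.p i a s := rfl

lemma key1 {A : Type*} [Fintype A] (T : SFTree S) (M : MDP S A) (y : S → ℝ)
    (i : S) (a : A) :
    ∑ j, M.p i a j * (∑ r ∈ T.delta T.root j, y r)
      = ∑ k ∈ T.desc T.root, M.ptail T i a k * y k := by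
  classical
  have hdelta : ∀ j, T.delta T.root j = (T.desc T.root).filter (fun k => j ∈ T.subtree k) := by
    intro j
    ext r
    rw [Finset.mem_filter, T.mem_delta_root, T.mem_desc_root, T.mem_subtree]
  calc ∑ j, M.p i a j * (∑ r ∈ T.delta T.root j, y r)
      = ∑ j, ∑ k ∈ T.desc T.root, (if j ∈ T.subtree k then M.p i a j * y k else 0) := by
        refine Finset.sum_congr rfl fun j _ => ?_
        rw [hdelta j, Finset.mul_sum, Finset.sum_filter]
    _ = ∑ k ∈ T.desc T.root, ∑ j, (if j ∈ T.subtree k then M.p i a j * y k else 0) :=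
        Finset.sum_comm
    _ = ∑ k ∈ T.desc T.root, M.ptail T i a k * y k := by
        refine Finset.sum_congr rfl fun k _ => ?_
        rw [Finset.sum_ite_mem, Finset.univ_inter, ptail_def, Finset.sum_mul]

lemma key2 {A : Type*} [Fintype A] (T : SFTree S) (M : MDP S A)
    (hsf : M.IsSkipFree T) (y : S → ℝ) {i : S} (hi : i ≠ T.root) (a : A) :
    ∑ k ∈ T.desc T.root, M.ptail T i a k * y k
      = ∑ k ∈ T.desc i, M.ptail T i a k * y k
        + (∑ r ∈ T.delta T.root i, y r) - M.p i a (T.parent i) * y i := by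
  classical
  have hsupp : ∀ j, M.p i a j ≠ 0 → j = T.parent i ∨ j ∈ T.subtree i := hsf i hi a
  have hself : i ∈ T.delta T.root i := by
    rw [T.mem_delta_root]
    exact ⟨hi, 0, rfl⟩
  have hD1D : T.desc i ⊆ T.desc T.root := by
    intro k hk
    rw [T.mem_desc] at hk
    obtain ⟨hki, n, hn⟩ := hk
    rw [T.mem_desc_root]
    rintro rfl
    exact hi (by rw [← hn, T.iterate_root])
  have hD2D : T.delta T.root i ⊆ T.desc T.root := by
    intro k hk
    rw [T.mem_delta_root] at hk
    exact (T.mem_desc_root).mpr hk.1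
  have hdisj : Disjoint (T.desc i) (T.delta T.root i) := by
    rw [Finset.disjoint_left]
    intro k hk1 hk2
    rw [T.mem_desc] at hk1
    rw [T.mem_delta_root] at hk2
    obtain ⟨hki, n, hn⟩ := hk1
    obtain ⟨-, m, hm⟩ := hk2
    exact hki (T.anti hn hm).symm
  have hpar_not := T.parent_not_mem_subtree hi
  have hsd : ∑ j ∈ Finset.univ \ T.subtree i, M.p i a j = M.p i a (T.parent i) := by
    apply Finset.sum_eq_single_of_mem
    · rw [Finset.mem_sdiff]
      exact ⟨Finset.mem_univ _, hpar_not⟩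
    · intro j hj hne
      by_contra hz
      rcases hsupp j hz with h1 | h2
      · exact hne h1
      · exact (Finset.mem_sdiff.mp hj).2 h2
  have hptail_self : M.ptail T i a i = 1 - M.p i a (T.parent i) := by
    have hsd2 := Finset.sum_sdiff (f := M.p i a) (Finset.subset_univ (T.subtree i))
    rw [hsd, M.p_sum_one i a] at hsd2
    rw [ptail_def]
    linarith
  have hanc : ∀ k ∈ T.delta T.root i, k ≠ i → M.ptail T i a k = 1 := by
    intro k hk hne
    rw [T.mem_delta_root] at hk
    obtain ⟨hkroot, n, hn⟩ := hk
    have hn0 : n ≠ 0 := by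
      rintro rfl
      exact hne hn.symm
    have hpar_mem : T.parent i ∈ T.subtree k := by
      rw [T.mem_subtree]
      refine ⟨n - 1, ?_⟩
      have h5 : T.parent^[n - 1 + 1] i = k := by
        rwa [Nat.sub_add_cancel (Nat.one_le_iff_ne_zero.mpr hn0)]
      rwa [Function.iterate_succ_apply] at h5
    have hsub_sub : T.subtree i ⊆ T.subtree k := by
      intro j hj
      rw [T.mem_subtree] at hj ⊢
      obtain ⟨m, hm⟩ := hj
      exact ⟨n + m, by rw [Function.iterate_add_apply, hm, hn]⟩
    rw [ptail_def, ← M.p_sum_one i a]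
    apply Finset.sum_subset (Finset.subset_univ _)
    intro j _ hj
    by_contra hz
    rcases hsupp j hz with h1 | h2
    · exact hj (h1 ▸ hpar_mem)
    · exact hj (hsub_sub h2)
  have hzero : ∀ k ∈ T.desc T.root, k ∉ T.desc i → k ∉ T.delta T.root i →
      M.ptail T i a k = 0 := by
    intro k hkD hk1 hk2
    rw [ptail_def]
    apply Finset.sum_eq_zero
    intro j hj
    rw [T.mem_subtree] at hj
    obtain ⟨n, hn⟩ := hj
    by_contra hz
    have hkroot : k ≠ T.root := (T.mem_desc_root).mp hkD
    rcases hsupp j hz with h1 | h2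
    · apply hk2
      rw [T.mem_delta_root]
      refine ⟨hkroot, n + 1, ?_⟩
      rw [Function.iterate_succ_apply, ← h1]
      exact hn
    · rw [T.mem_subtree] at h2
      obtain ⟨m, hm⟩ := h2
      rcases le_total n m with hle | hle
      · have h6 : T.parent^[m - n] k = i := by
          rw [← hn, ← Function.iterate_add_apply, Nat.sub_add_cancel hle]
          exact hm
        by_cases hki : k = i
        · exact hk2 (hki ▸ hself)
        · exact hk1 ((T.mem_desc).mpr ⟨hki, m - n, h6⟩)
      · have h6 : T.parent^[n - m] i = k := by
          rw [← hm, ← Function.iterate_add_apply, Nat.sub_add_cancel hle]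
          exact hn
        exact hk2 ((T.mem_delta_root).mpr ⟨hkroot, n - m, h6⟩)
  have hunion_sub : T.desc i ∪ T.delta T.root i ⊆ T.desc T.root :=
    Finset.union_subset hD1D hD2D
  have hstep1 : ∑ k ∈ T.desc T.root, M.ptail T i a k * y k
      = ∑ k ∈ T.desc i ∪ T.delta T.root i, M.ptail T i a k * y k := by
    symm
    apply Finset.sum_subset hunion_sub
    intro k hk hknot
    rw [Finset.mem_union] at hknot
    push_neg at hknot
    rw [hzero k hk hknot.1 hknot.2, zero_mul]
  have hstep2 := Finset.sum_union hdisj (f := fun k => M.ptail T i a k * y k)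
  have hstep3 : ∑ k ∈ T.delta T.root i, M.ptail T i a k * y k
      = (∑ r ∈ T.delta T.root i, y r) - M.p i a (T.parent i) * y i := by
    have hterm : ∀ k ∈ T.delta T.root i, M.ptail T i a k * y k
        = y k - (if k = i then M.p i a (T.parent i) * y i else 0) := by
      intro k hk
      by_cases hki : k = i
      · subst hki
        rw [hptail_self, if_pos rfl]
        ring
      · rw [hanc k hk hki, if_neg hki, one_mul, sub_zero]
    rw [Finset.sum_congr rfl hterm, Finset.sum_sub_distrib, Finset.sum_ite_eq' _ i _,
      if_pos hself]
  rw [hstep1, hstep2, hstep3]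
  ring


lemma abs_sub_le' {a b C D : ℝ} (ha : |a| ≤ C) (hb : |b| ≤ D) : |a - b| ≤ C + D := by
  have h := abs_add_le a (-b)
  rw [abs_neg] at h
  rw [sub_eq_add_neg]
  linarith

lemma absbound (u : S → ℝ) (j : S) : |u j| ≤ ∑ k, |u k| :=
  Finset.single_le_sum (fun k _ => abs_nonneg (u k)) (Finset.mem_univ j)

lemma avg_upper (P : Matrix S S ℝ) (hP : ∀ i j, 0 ≤ P i j) (hP1 : ∀ i, ∑ j, P i j = 1)
    (w : S → ℝ) (z : S) (n : ℕ) :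
    (n : ℝ)⁻¹ * (∑ t ∈ Finset.range n, ((P ^ t).mulVec w) z) ≤ ∑ k, |w k| := by
  have hCw0 : 0 ≤ ∑ k, |w k| := Finset.sum_nonneg fun k _ => abs_nonneg _
  rcases Nat.eq_zero_or_pos n with rfl | hn
  · simpa using hCw0
  · have hn0 : (0 : ℝ) < n := by exact_mod_cast hn
    have h1 : ∑ t ∈ Finset.range n, ((P ^ t).mulVec w) z ≤ n * ∑ k, |w k| := by
      calc ∑ t ∈ Finset.range n, ((P ^ t).mulVec w) z
          ≤ ∑ t ∈ Finset.range n, ∑ k, |w k| := Finset.sum_le_sum fun t _ =>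
            (abs_le.mp (mulVec_abs_le P hP hP1 w _ (absbound w) t z)).2
        _ = n * ∑ k, |w k| := by rw [Finset.sum_const, Finset.card_range, nsmul_eq_mul]
    calc (n : ℝ)⁻¹ * (∑ t ∈ Finset.range n, ((P ^ t).mulVec w) z)
        ≤ (n : ℝ)⁻¹ * ((n : ℝ) * ∑ k, |w k|) :=
          mul_le_mul_of_nonneg_left h1 (inv_nonneg.mpr hn0.le)
      _ = ∑ k, |w k| := by field_simp

lemma avg_lower (P : Matrix S S ℝ) (hP : ∀ i j, 0 ≤ P i j) (hP1 : ∀ i, ∑ j, P i j = 1)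
    (w : S → ℝ) (z : S) (n : ℕ) :
    -(∑ k, |w k|) ≤ (n : ℝ)⁻¹ * (∑ t ∈ Finset.range n, ((P ^ t).mulVec w) z) := by
  have hCw0 : 0 ≤ ∑ k, |w k| := Finset.sum_nonneg fun k _ => abs_nonneg _
  rcases Nat.eq_zero_or_pos n with rfl | hn
  · simpa using hCw0
  · have hn0 : (0 : ℝ) < n := by exact_mod_cast hn
    have h1 : (n : ℝ) * (-(∑ k, |w k|)) ≤ ∑ t ∈ Finset.range n, ((P ^ t).mulVec w) z := by
      calc (n : ℝ) * (-(∑ k, |w k|)) = ∑ t ∈ Finset.range n, (-(∑ k, |w k|)) := by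
            rw [Finset.sum_const, Finset.card_range, nsmul_eq_mul]
        _ ≤ ∑ t ∈ Finset.range n, ((P ^ t).mulVec w) z := Finset.sum_le_sum fun t _ =>
            (abs_le.mp (mulVec_abs_le P hP hP1 w _ (absbound w) t z)).1.trans_eq' (by ring)
    have h2 := mul_le_mul_of_nonneg_left h1 (inv_nonneg.mpr hn0.le)
    calc -(∑ k, |w k|) = (n : ℝ)⁻¹ * ((n : ℝ) * (-(∑ k, |w k|))) := by
          rw [inv_mul_cancel_left₀ (ne_of_gt hn0)]
      _ ≤ (n : ℝ)⁻¹ * (∑ t ∈ Finset.range n, ((P ^ t).mulVec w) z) := h2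

lemma lemA [Nonempty S] (P : Matrix S S ℝ) (hP : ∀ i j, 0 ≤ P i j)
    (hP1 : ∀ i, ∑ j, P i j = 1) (hirr : MatIrreducible P) (w : S → ℝ) :
    ∃ g : ℝ, ∀ i, Filter.limsup
      (fun n : ℕ => (n : ℝ)⁻¹ * ∑ t ∈ Finset.range n, ((P ^ t).mulVec w) i)
      Filter.atTop = g := by
  obtain ⟨π, hπpos, hπinv⟩ := exists_pi P hP hP1 hirr
  obtain ⟨u, hu⟩ := solve P hP hP1 hirr π hπpos hπinv w
  set γ : ℝ := (∑ k, π k * w k) / (∑ k, π k) with hγ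
  refine ⟨γ, fun i => ?_⟩
  have htel := telescope_eq P hP1 w u γ hu
  apply limsup_inv_mul_eq γ ((∑ k, |u k|) + ∑ k, |u k|)
  intro n
  rw [htel n i]
  have h1 := absbound u i
  have h2 := mulVec_abs_le P hP hP1 u _ (absbound u) n i
  have h3 : (n : ℝ) * γ + u i - ((P ^ n).mulVec u) i - n * γ
      = u i - ((P ^ n).mulVec u) i := by ring
  rw [h3]
  exact abs_sub_le' h1 h2

lemma lemB [Nonempty S] (P : Matrix S S ℝ) (hP : ∀ i j, 0 ≤ P i j)
    (hP1 : ∀ i, ∑ j, P i j = 1) (hirr : MatIrreducible P)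
    (w h : S → ℝ) (x κ : ℝ) (z : S)
    (hrel : ∀ i, h i + x + κ * (if i = z then (1 : ℝ) else 0) ≤ w i + P.mulVec h i)
    (hxval : Filter.limsup
      (fun n : ℕ => (n : ℝ)⁻¹ * ∑ t ∈ Finset.range n, ((P ^ t).mulVec w) z)
      Filter.atTop = x) :
    κ ≤ 0 := by
  obtain ⟨π, hπpos, hπinv⟩ := exists_pi P hP hP1 hirr
  have hπsum : 0 < ∑ k, π k := Finset.sum_pos (fun k _ => hπpos k) Finset.univ_nonempty
  obtain ⟨f, hf⟩ := solve P hP hP1 hirr π hπpos hπinv (fun j => if j = z then (1 : ℝ) else 0)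
  set ν : ℝ := (∑ k, π k * (if k = z then (1 : ℝ) else 0)) / (∑ k, π k) with hν
  have hνpos : 0 < ν := by
    rw [hν]
    apply div_pos _ hπsum
    have h5 : ∑ k, π k * (if k = z then (1 : ℝ) else 0) = π z := by
      simp only [mul_ite, mul_one, mul_zero]
      simp
    rw [h5]
    exact hπpos z
  have hN := telescope_eq P hP1 (fun j => if j = z then (1 : ℝ) else 0) f ν hf
  have htelge := telescope_ge P hP hP1 w h (fun j => if j = z then (1 : ℝ) else 0) x κ hrel
  have hble : ∀ᶠ n in Filter.atTop,
      (fun n : ℕ => x + κ * ν + (n : ℝ)⁻¹ *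
        (κ * (f z - ((P ^ n).mulVec f) z) + (h z - ((P ^ n).mulVec h) z))) n
      ≤ (fun n : ℕ => (n : ℝ)⁻¹ * ∑ t ∈ Finset.range n, ((P ^ t).mulVec w) z) n := by
    filter_upwards [Filter.eventually_ge_atTop 1] with n hn
    have hn0 : (0 : ℝ) < n := by exact_mod_cast hn
    have ht := htelge n z
    rw [hN n z] at ht
    have hident : (n : ℝ) * x + κ * ((n : ℝ) * ν + f z - ((P ^ n).mulVec f) z)
          + h z - ((P ^ n).mulVec h) z
        = (n : ℝ) * (x + κ * ν)
          + (κ * (f z - ((P ^ n).mulVec f) z) + (h z - ((P ^ n).mulVec h) z)) := by ring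
    rw [hident] at ht
    have h6 := mul_le_mul_of_nonneg_left ht (inv_nonneg.mpr hn0.le)
    have h7 : (n : ℝ)⁻¹ * ((n : ℝ) * (x + κ * ν)
          + (κ * (f z - ((P ^ n).mulVec f) z) + (h z - ((P ^ n).mulVec h) z)))
        = x + κ * ν + (n : ℝ)⁻¹ *
          (κ * (f z - ((P ^ n).mulVec f) z) + (h z - ((P ^ n).mulVec h) z)) := by
      field_simp
    rw [h7] at h6
    exact h6
  have hbtend : Filter.Tendsto
      (fun n : ℕ => x + κ * ν + (n : ℝ)⁻¹ *
        (κ * (f z - ((P ^ n).mulVec f) z) + (h z - ((P ^ n).mulVec h) z)))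
      Filter.atTop (nhds (x + κ * ν)) := by
    apply tendsto_const_add_inv_mul (x + κ * ν)
      (|κ| * ((∑ k, |f k|) + ∑ k, |f k|) + ((∑ k, |h k|) + ∑ k, |h k|))
    intro n
    have h8 : |κ * (f z - ((P ^ n).mulVec f) z)|
        ≤ |κ| * ((∑ k, |f k|) + ∑ k, |f k|) := by
      rw [abs_mul]
      exact mul_le_mul_of_nonneg_left
        (abs_sub_le' (absbound f z) (mulVec_abs_le P hP hP1 f _ (absbound f) n z))
        (abs_nonneg κ)
    have h9 : |h z - ((P ^ n).mulVec h) z| ≤ (∑ k, |h k|) + ∑ k, |h k| :=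
      abs_sub_le' (absbound h z) (mulVec_abs_le P hP hP1 h _ (absbound h) n z)
    calc |κ * (f z - ((P ^ n).mulVec f) z) + (h z - ((P ^ n).mulVec h) z)|
        ≤ |κ * (f z - ((P ^ n).mulVec f) z)| + |h z - ((P ^ n).mulVec h) z| :=
          abs_add_le _ _
      _ ≤ _ := by linarith
  have hge := le_limsup_of_tendsto_le
    (fun n : ℕ => (n : ℝ)⁻¹ * ∑ t ∈ Finset.range n, ((P ^ t).mulVec w) z)
    (fun n : ℕ => x + κ * ν + (n : ℝ)⁻¹ *
      (κ * (f z - ((P ^ n).mulVec f) z) + (h z - ((P ^ n).mulVec h) z)))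
    (x + κ * ν) (∑ k, |w k|) hble hbtend (fun n => avg_upper P hP hP1 w z n)
  rw [hxval] at hge
  nlinarith [hνpos, hge]

lemma lemC (Q : Matrix S S ℝ) (hQ : ∀ i j, 0 ≤ Q i j) (hQ1 : ∀ i, ∑ j, Q i j = 1)
    (w1 h : S → ℝ) (x : ℝ)
    (hrel : ∀ i, w1 i + Q.mulVec h i ≤ h i + x) (i : S) :
    Filter.limsup
      (fun n : ℕ => (n : ℝ)⁻¹ * ∑ t ∈ Finset.range n, ((Q ^ t).mulVec w1) i)
      Filter.atTop ≤ x := by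
  have htel := telescope_le Q hQ hQ1 w1 h x hrel
  apply limsup_le_of_le_tendsto _
    (fun n : ℕ => x + (n : ℝ)⁻¹ * (h i - ((Q ^ n).mulVec h) i)) x (-(∑ k, |w1 k|))
  · filter_upwards [Filter.eventually_ge_atTop 1] with n hn
    have hn0 : (0 : ℝ) < n := by exact_mod_cast hn
    have ht := htel n i
    have h6 := mul_le_mul_of_nonneg_left ht (inv_nonneg.mpr hn0.le)
    have h7 : (n : ℝ)⁻¹ * ((n : ℝ) * x + h i - ((Q ^ n).mulVec h) i)
        = x + (n : ℝ)⁻¹ * (h i - ((Q ^ n).mulVec h) i) := by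
      field_simp
      ring
    rw [h7] at h6
    exact h6
  · apply tendsto_const_add_inv_mul x ((∑ k, |h k|) + ∑ k, |h k|)
    intro n
    exact abs_sub_le' (absbound h i) (mulVec_abs_le Q hQ hQ1 h _ (absbound h) n i)
  · exact fun n => avg_lower Q hQ hQ1 w1 i n

end StmtAux
end

/-- for a finite recurrent skip-free MDP on a tree, let `d` be a policy and
`x = g(d)` its average cost; let `d¹` be the optimal policy of the `x`-revised first-return
problem (using the downward-recursion minimisers off the root and
`argmin_a (c₀(a)-x+∑ p̄ y)/(1-p₀₀(a))` at the root). Then `g(d¹) ≤ g(d)`. -/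
theorem stmt6 {S A : Type*} [Fintype S] [DecidableEq S] [Fintype A] [Nonempty A]
    (T : SFTree S) (M : MDP S A)
    (hsf : M.IsSkipFree T) (hrec : IsRecurrentModel M)
    (h00 : ∀ a : A, M.p T.root a T.root < 1)
    (hpar : ∀ i, i ≠ T.root → ∀ a : A, 0 < M.p i a (T.parent i))
    (d : S → A) (x : ℝ) (hx : x = M.avgCost d T.root)
    (y : S → ℝ) (aSel : S → A)
    (hy : ∀ i, i ≠ T.root →
      y i = ⨅ a : A, (M.c i a - x + ∑ k ∈ T.desc i, M.ptail T i a k * y k)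
          / M.p i a (T.parent i))
    (ha : ∀ i, i ≠ T.root →
      (M.c i (aSel i) - x + ∑ k ∈ T.desc i, M.ptail T i (aSel i) k * y k)
          / M.p i (aSel i) (T.parent i) = y i)
    (d1 : S → A)
    (hd1root : (M.c T.root (d1 T.root) - x
          + ∑ k ∈ T.desc T.root, M.ptail T T.root (d1 T.root) k * y k)
          / (1 - M.p T.root (d1 T.root) T.root)
        = ⨅ a : A, (M.c T.root a - x + ∑ k ∈ T.desc T.root, M.ptail T T.root a k * y k)
          / (1 - M.p T.root a T.root))
    (hd1 : ∀ i, i ≠ T.root → d1 i = aSel i) :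
    ∀ i, M.avgCost d1 i ≤ M.avgCost d i := by
  classical
  intro i0
  have _hS : Nonempty S := ⟨T.root⟩
  have hP : ∀ i j, 0 ≤ M.Pmat d i j := fun i j => M.p_nonneg i (d i) j
  have hP1 : ∀ i, ∑ j, M.Pmat d i j = 1 := fun i => M.p_sum_one i (d i)
  have hQ : ∀ i j, 0 ≤ M.Pmat d1 i j := fun i j => M.p_nonneg i (d1 i) j
  have hQ1 : ∀ i, ∑ j, M.Pmat d1 i j = 1 := fun i => M.p_sum_one i (d1 i)
  obtain ⟨g, hg⟩ := StmtAux.lemA (M.Pmat d) hP hP1 (hrec d) (M.cvec d)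
  have havg : ∀ i, M.avgCost d i = g := fun i => hg i
  have hxg : x = g := by rw [hx]; exact havg T.root
  have hPh : ∀ (dp : S → A) (i : S),
      (M.Pmat dp).mulVec (fun j => ∑ r' ∈ T.delta T.root j, y r') i
        = ∑ k ∈ T.desc T.root, M.ptail T i (dp i) k * y k :=
    fun dp i => StmtAux.key1 T M y i (dp i)
  have hroot0 : (∑ r' ∈ T.delta T.root T.root, y r') = 0 := by
    rw [T.delta_root_root]; exact Finset.sum_empty
  have hrel_d : ∀ i, (fun j => ∑ r' ∈ T.delta T.root j, y r') i + x
      + (M.c T.root (d T.root) - x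
          + ∑ k ∈ T.desc T.root, M.ptail T T.root (d T.root) k * y k)
        * (if i = T.root then (1 : ℝ) else 0)
      ≤ M.cvec d i + (M.Pmat d).mulVec (fun j => ∑ r' ∈ T.delta T.root j, y r') i := by
    intro i
    rw [hPh d i]
    beta_reduce
    by_cases hir : i = T.root
    · subst hir
      rw [hroot0, if_pos rfl]
      have hcv : M.cvec d T.root = M.c T.root (d T.root) := rfl
      rw [hcv]
      linarith
    · rw [if_neg hir, StmtAux.key2 T M hsf y hir (d i)]
      have hcv : M.cvec d i = M.c i (d i) := rfl
      have hpos := hpar i hir (d i)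
      have h1 : y i ≤ (M.c i (d i) - x + ∑ k ∈ T.desc i, M.ptail T i (d i) k * y k)
          / M.p i (d i) (T.parent i) := by
        rw [hy i hir]
        exact ciInf_le (Finite.bddBelow_range _) (d i)
      have h2 := (le_div_iff₀ hpos).mp h1
      rw [hcv]
      nlinarith [h2]
  have hκle := StmtAux.lemB (M.Pmat d) hP hP1 (hrec d) (M.cvec d)
    (fun j => ∑ r' ∈ T.delta T.root j, y r') x
    (M.c T.root (d T.root) - x
      + ∑ k ∈ T.desc T.root, M.ptail T T.root (d T.root) k * y k)
    T.root hrel_d ((hg T.root).trans hxg.symm)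
  have hD1pos : 0 < 1 - M.p T.root (d1 T.root) T.root := by linarith [h00 (d1 T.root)]
  have hDpos : 0 < 1 - M.p T.root (d T.root) T.root := by linarith [h00 (d T.root)]
  have hinfle : (M.c T.root (d1 T.root) - x
        + ∑ k ∈ T.desc T.root, M.ptail T T.root (d1 T.root) k * y k)
        / (1 - M.p T.root (d1 T.root) T.root)
      ≤ (M.c T.root (d T.root) - x
        + ∑ k ∈ T.desc T.root, M.ptail T T.root (d T.root) k * y k)
        / (1 - M.p T.root (d T.root) T.root) := by
    rw [hd1root]
    exact ciInf_le (Finite.bddBelow_range _) (d T.root)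
  have hquot : (M.c T.root (d T.root) - x
        + ∑ k ∈ T.desc T.root, M.ptail T T.root (d T.root) k * y k)
        / (1 - M.p T.root (d T.root) T.root) ≤ 0 :=
    div_nonpos_of_nonpos_of_nonneg hκle hDpos.le
  have hκ1le : (M.c T.root (d1 T.root) - x
      + ∑ k ∈ T.desc T.root, M.ptail T T.root (d1 T.root) k * y k) ≤ 0 := by
    have h3 := le_trans hinfle hquot
    by_contra hcon
    push_neg at hcon
    have := div_pos hcon hD1pos
    linarith
  have hrel_d1 : ∀ i, M.cvec d1 i
      + (M.Pmat d1).mulVec (fun j => ∑ r' ∈ T.delta T.root j, y r') i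
      ≤ (fun j => ∑ r' ∈ T.delta T.root j, y r') i + x := by
    intro i
    rw [hPh d1 i]
    beta_reduce
    by_cases hir : i = T.root
    · subst hir
      rw [hroot0]
      have hcv : M.cvec d1 T.root = M.c T.root (d1 T.root) := rfl
      rw [hcv]
      linarith
    · rw [StmtAux.key2 T M hsf y hir (d1 i)]
      have hcv : M.cvec d1 i = M.c i (d1 i) := rfl
      rw [hcv, hd1 i hir]
      have hpos := hpar i hir (aSel i)
      have h1 := ha i hir
      have h2 : M.c i (aSel i) - x + ∑ k ∈ T.desc i, M.ptail T i (aSel i) k * y k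
          = y i * M.p i (aSel i) (T.parent i) := by
        rw [← h1]
        field_simp
      nlinarith [h2]
  have hfin := StmtAux.lemC (M.Pmat d1) hQ hQ1 (M.cvec d1)
    (fun j => ∑ r' ∈ T.delta T.root j, y r') x hrel_d1 i0
  have hres : M.avgCost d1 i0 ≤ x := hfin
  rw [havg i0, ← hxg]
  exact hres
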